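/- Let K be a number field, K̄ an algebraic closure of K, and O_K̄ the integral closure of O_K in K̄. If ξ ∈ W_{O_K}(O_K̄) is a Witt vector all of whose coefficients ξ_a lie in O_L for some finite subextension L/K of K̄/K (with ring of integers O_L), then ξ, regarded as an element of O_L^{I_K}, belongs to W_{O_K}(O_L). That is, O_L^{I_K} ∩ W_{O_K}(O_K̄) ⊆ W_{O_K}(O_L). -/

import Mathlib

open NumberField

noncomputable section

/-- The multiplicative monoid `I_K` of nonzero ideals of the ring of integers of `K`. -/
def IdealMonoid (K : Type) [Field K] [NumberField K] : Submonoid (Ideal (𝓞 K)) where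
  carrier := {I | I ≠ ⊥}
  mul_mem' := by
    intro a b ha hb h
    rcases Ideal.mul_eq_bot.mp h with h' | h'
    · exact ha h'
    · exact hb h'
  one_mem' := by
    simp only [Set.mem_setOf_eq, Ideal.one_eq_top]
    exact top_ne_bot

/-- `I_K`, the monoid of nonzero ideals, as a type. -/
abbrev IK (K : Type) [Field K] [NumberField K] := ↥(IdealMonoid K)

/-- `P_K`, the set of nonzero prime ideals of `𝓞 K`, as a type. -/
def PrimeIdeal (K : Type) [Field K] [NumberField K] :=
  {p : Ideal (𝓞 K) // p.IsPrime ∧ p ≠ ⊥}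

/-- A nonzero prime ideal, regarded as an element of `I_K`. -/
def PrimeIdeal.toIK {K : Type} [Field K] [NumberField K] (p : PrimeIdeal K) : IK K :=
  ⟨p.1, p.2.2⟩

/-- `#k_p`: the cardinality of the residue ring `R ⧸ p`. -/
def residueCard {R : Type} [CommRing R] (p : Ideal R) : ℕ :=
  Nat.card (R ⧸ p)

/-- The shift operator `ψ_a` on `A^{I_K}`: `(ψ_a ξ)_b = ξ_{a·b}`. -/
def shift {K : Type} [Field K] [NumberField K] {A : Type} (a : IK K)
    (ξ : IK K → A) : IK K → A :=
  fun b => ξ (a * b)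

/-- For an ideal `p` of `𝓞 K` and a subset `S ⊆ A^{I_K}`, the set `p·S` of all finite
sums of products of elements of `p` with elements of (the module generated by) `S`. -/
def idealMulSet {K : Type} [Field K] [NumberField K] {A : Type} [CommRing A]
    [Algebra (𝓞 K) A] (p : Ideal (𝓞 K)) (S : Set (IK K → A)) : Set (IK K → A) :=
  ↑(p • Submodule.span (𝓞 K) S)

/-- The descending chain `U_n(A)` of subsets of `A^{I_K}`. -/
def UnSet (K : Type) [Field K] [NumberField K] (A : Type) [CommRing A]
    [Algebra (𝓞 K) A] : ℕ → Set (IK K → A)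
  | 0 => Set.univ
  | n + 1 => {ξ | ξ ∈ UnSet K A n ∧ ∀ p : PrimeIdeal K,
      shift p.toIK ξ - ξ ^ residueCard p.1 ∈ idealMulSet p.1 (UnSet K A n)}

/-- The ring of Witt vectors `W_{O_K}(A) = ⋂ₙ U_n(A)`, as a subset of `A^{I_K}`. -/
def WittSet (K : Type) [Field K] [NumberField K] (A : Type) [CommRing A]
    [Algebra (𝓞 K) A] : Set (IK K → A) :=
  ⋂ n, UnSet K A n

/-- A deterministic finite automaton with output, over input alphabet `Δ` and
output alphabet `O`. -/
structure DFAO (Δ O : Type) : Type 1 where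
  State : Type
  [finState : Finite State]
  trans : State → Δ → State
  start : State
  out : State → O

/-- The output of a DFAO on an input word, processing letters from left to right. -/
def DFAO.output {Δ O : Type} (M : DFAO Δ O) (l : List Δ) : O :=
  M.out (l.foldl M.trans M.start)

/-- `ξ ∈ A^{I_K}` is automatic if some DFAO with input alphabet `P_K` and output
alphabet `A` produces `ξ_a` from every word of primes whose product is `a`. -/
def IsAutomatic {K : Type} [Field K] [NumberField K] {A : Type}
    (ξ : IK K → A) : Prop :=
  ∃ M : DFAO (PrimeIdeal K) A, ∀ (l : List (PrimeIdeal K)) (a : IK K),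
    (a : Ideal (𝓞 K)) = (l.map Subtype.val).prod → ξ a = M.output l

/-- `v_p(a)`: the largest `e` such that `p^e` divides `a`. -/
def vIdeal {R : Type} [CommRing R] (p a : Ideal R) : ℕ :=
  sSup {e : ℕ | p ^ e ∣ a}

/-- The ring of integers `O_L = O_K̄ ∩ L` of a subextension `L/K` of `K̄/K`, as a
subalgebra of the integral closure `O_K̄` of `O_K` in `K̄`. -/
def subRingOfIntegers (K : Type) [Field K] [NumberField K]
    (L : IntermediateField K (AlgebraicClosure K)) :
    Subalgebra (𝓞 K) ↥(integralClosure (𝓞 K) (AlgebraicClosure K)) :=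
  (Subalgebra.restrictScalars (𝓞 K) L.toSubalgebra).comap
    (integralClosure (𝓞 K) (AlgebraicClosure K)).val

section AuxPrime

open nonZeroDivisors

variable {K : Type} [Field K] [NumberField K]

lemma PrimeIdeal.isMaximal (p : PrimeIdeal K) : p.1.IsMaximal :=
  Ideal.IsPrime.isMaximal p.2.1 p.2.2

/-- Choice of a fintype structure on the residue field. -/
noncomputable def PrimeIdeal.resFintype (p : PrimeIdeal K) : Fintype (𝓞 K ⧸ p.1) :=
  @Fintype.ofFinite _ (Ideal.finiteQuotientOfFreeOfNeBot _ p.2.2)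

set_option maxHeartbeats 1000000 in
set_option synthInstance.maxHeartbeats 400000 in
lemma PrimeIdeal.exists_char (p : PrimeIdeal K) :
    ∃ ℓ f : ℕ, ℓ.Prime ∧ 0 < f ∧ residueCard p.1 = ℓ ^ f ∧ (ℓ : 𝓞 K) ∈ p.1 := by
  haveI := p.isMaximal
  letI := Ideal.Quotient.field p.1
  letI := p.resFintype
  obtain ⟨ℓ, -, f, hℓ, hcard⟩ := FiniteField.card' (𝓞 K ⧸ p.1)
  have hq : residueCard p.1 = ℓ ^ (f : ℕ) := by
    rw [residueCard, Nat.card_eq_fintype_card, hcard]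
  refine ⟨ℓ, f, hℓ, f.2, hq, ?_⟩
  have h0 : ((ℓ : ℕ) : 𝓞 K ⧸ p.1) = 0 := by
    have := FiniteField.cast_card_eq_zero (𝓞 K ⧸ p.1)
    rw [hcard] at this
    push_cast at this
    exact pow_eq_zero_iff (by exact_mod_cast f.2.ne') |>.mp this
  have : (Ideal.Quotient.mk p.1) ((ℓ : ℕ) : 𝓞 K) = 0 := by
    rw [map_natCast]; exact h0
  exact Ideal.Quotient.eq_zero_iff_mem.mp this

lemma PrimeIdeal.residueCard_ne_zero (p : PrimeIdeal K) : residueCard p.1 ≠ 0 := by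
  obtain ⟨ℓ, f, hℓ, hf, hq, -⟩ := p.exists_char
  rw [hq]
  exact pow_ne_zero _ hℓ.pos.ne'

set_option maxHeartbeats 1000000 in
set_option synthInstance.maxHeartbeats 400000 in
lemma PrimeIdeal.pow_residueCard_sub_mem (p : PrimeIdeal K) (c : 𝓞 K) :
    c ^ residueCard p.1 - c ∈ p.1 := by
  haveI := p.isMaximal
  letI := Ideal.Quotient.field p.1
  letI := p.resFintype
  have : (Ideal.Quotient.mk p.1) (c ^ residueCard p.1 - c) = 0 := by
    rw [map_sub, map_pow, residueCard, Nat.card_eq_fintype_card, FiniteField.pow_card, sub_self]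
  exact Ideal.Quotient.eq_zero_iff_mem.mp this

set_option maxHeartbeats 1000000 in
set_option synthInstance.maxHeartbeats 400000 in
lemma PrimeIdeal.exists_pow_principal (p : PrimeIdeal K) :
    ∃ (h : ℕ) (c : 𝓞 K), 0 < h ∧ c ≠ 0 ∧ p.1 ^ h = Ideal.span {c} := by
  have hp0 : p.1 ∈ (Ideal (𝓞 K))⁰ := mem_nonZeroDivisors_iff_ne_zero.mpr p.2.2
  set h := Fintype.card (ClassGroup (𝓞 K)) with hh
  have hpos : 0 < h := Fintype.card_pos
  have hph0 : p.1 ^ h ∈ (Ideal (𝓞 K))⁰ := pow_mem hp0 h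
  have h1 : ClassGroup.mk0 (⟨p.1, hp0⟩ ^ h) = 1 := by
    rw [map_pow]; exact pow_card_eq_one
  have h2 : (⟨p.1, hp0⟩ : (Ideal (𝓞 K))⁰) ^ h = ⟨p.1 ^ h, hph0⟩ :=
    Subtype.ext (SubmonoidClass.coe_pow _ _)
  rw [h2] at h1
  have hprin : (p.1 ^ h).IsPrincipal := (ClassGroup.mk0_eq_one_iff hph0).mp h1
  obtain ⟨c, hc⟩ := hprin
  refine ⟨h, c, hpos, ?_, by rw [hc]⟩
  rintro rfl
  obtain ⟨x, hxp, hx0⟩ := Submodule.exists_mem_ne_zero_of_ne_bot p.2.2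
  have : x ^ h ∈ p.1 ^ h := Ideal.pow_mem_pow hxp h
  rw [hc] at this
  rw [Ideal.submodule_span_eq, Set.singleton_zero, Ideal.span_zero, Ideal.mem_bot] at this
  exact hx0 (pow_eq_zero_iff hpos.ne' |>.mp this)

end AuxPrime

section UnSetClosure

variable {K : Type} [Field K] [NumberField K]
variable {A : Type} [CommRing A] [Algebra (𝓞 K) A]

lemma mem_unset_succ_iff {n : ℕ} {ξ : IK K → A} :
    ξ ∈ UnSet K A (n + 1) ↔ ξ ∈ UnSet K A n ∧ ∀ p : PrimeIdeal K,
      shift p.toIK ξ - ξ ^ residueCard p.1 ∈ idealMulSet p.1 (UnSet K A n) :=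
  Iff.rfl

/-- The shift as a linear map. -/
def shiftLM (r : IK K) : (IK K → A) →ₗ[𝓞 K] (IK K → A) where
  toFun := shift r
  map_add' _ _ := rfl
  map_smul' _ _ := rfl

lemma shift_comm (r s : IK K) (x : IK K → A) :
    shift r (shift s x) = shift s (shift r x) := by
  funext b
  show x (s * (r * b)) = x (r * (s * b))
  rw [mul_left_comm]

lemma shift_mul (r : IK K) (x y : IK K → A) :
    shift r (x * y) = shift r x * shift r y := rfl

lemma shift_pow (r : IK K) (x : IK K → A) (m : ℕ) :
    shift r (x ^ m) = shift r x ^ m := rfl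

lemma shift_add (r : IK K) (x y : IK K → A) :
    shift r (x + y) = shift r x + shift r y := rfl

lemma shift_one (r : IK K) : shift r (1 : IK K → A) = 1 := rfl

lemma shift_zero (r : IK K) : shift r (0 : IK K → A) = 0 := rfl

/-- All the closure properties of `U_n`, proved simultaneously by induction. -/
lemma unset_closure (n : ℕ) :
    ((0 : IK K → A) ∈ UnSet K A n) ∧
    ((1 : IK K → A) ∈ UnSet K A n) ∧
    (∀ x y : IK K → A, x ∈ UnSet K A n → y ∈ UnSet K A n → x + y ∈ UnSet K A n) ∧
    (∀ (c : 𝓞 K) (x : IK K → A), x ∈ UnSet K A n → c • x ∈ UnSet K A n) ∧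
    (∀ x y : IK K → A, x ∈ UnSet K A n → y ∈ UnSet K A n → x * y ∈ UnSet K A n) ∧
    (∀ (r : IK K) (x : IK K → A), x ∈ UnSet K A n → shift r x ∈ UnSet K A n) := by
  induction n with
  | zero =>
      exact ⟨trivial, trivial, fun _ _ _ _ => trivial, fun _ _ _ => trivial,
        fun _ _ _ _ => trivial, fun _ _ _ => trivial⟩
  | succ n ih =>
      obtain ⟨h0, h1, hadd, hsmul, hmul, hshift⟩ := ih
      -- the span of U_n
      set M : Submodule (𝓞 K) (IK K → A) := Submodule.span (𝓞 K) (UnSet K A n) with hM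
      -- power closure
      have hpow : ∀ (x : IK K → A), x ∈ UnSet K A n → ∀ m : ℕ, x ^ m ∈ UnSet K A n := by
        intro x hx m
        induction m with
        | zero => simp only [pow_zero]; exact h1
        | succ m ihm => rw [pow_succ]; exact hmul _ _ ihm hx
      -- stability of M under multiplication by U_n elements
      have hMmul : ∀ u : IK K → A, u ∈ UnSet K A n → ∀ w ∈ M, u * w ∈ M := by
        intro u hu w hw
        induction hw using Submodule.span_induction with
        | mem z hz => exact Submodule.subset_span (hmul _ _ hu hz)
        | zero => simpa using M.zero_mem
        | add a b _ _ ha hb => rw [mul_add]; exact M.add_mem ha hb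
        | smul c a _ ha => rw [mul_smul_comm]; exact M.smul_mem c ha
      -- stability of p • M under multiplication by U_n elements
      have hpMmul : ∀ (p : Ideal (𝓞 K)) (u : IK K → A), u ∈ UnSet K A n →
          ∀ w ∈ p • M, u * w ∈ p • M := by
        intro p u hu w hw
        refine Submodule.smul_induction_on hw (fun r hr z hz => ?_) (fun a b ha hb => ?_)
        · rw [mul_smul_comm]
          exact Submodule.smul_mem_smul hr (hMmul u hu z hz)
        · rw [mul_add]; exact Submodule.add_mem _ ha hb
      -- stability of p • M under shifts
      have hpMshift : ∀ (p : Ideal (𝓞 K)) (r : IK K), ∀ w ∈ p • M, shift r w ∈ p • M := by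
        intro p r w hw
        refine Submodule.smul_induction_on hw (fun c hc z hz => ?_) (fun a b ha hb => ?_)
        · have hz' : shift r z ∈ M := by
            induction hz using Submodule.span_induction with
            | mem v hv => exact Submodule.subset_span (hshift r v hv)
            | zero => rw [shift_zero]; exact M.zero_mem
            | add a b _ _ ha hb => rw [shift_add]; exact M.add_mem ha hb
            | smul c a _ ha =>
                have : shift r (c • a) = c • shift r a := rfl
                rw [this]; exact M.smul_mem c ha
          have : shift r (c • z) = c • shift r z := rfl
          rw [this]
          exact Submodule.smul_mem_smul hc hz'
        · rw [shift_add]; exact Submodule.add_mem _ ha hb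
      -- the Frobenius-additivity defect lies in p • M
      have hdefect : ∀ (p : PrimeIdeal K) (x y : IK K → A), x ∈ UnSet K A n → y ∈ UnSet K A n →
          (x + y) ^ residueCard p.1 - x ^ residueCard p.1 - y ^ residueCard p.1 ∈ p.1 • M := by
        intro p x y hx hy
        obtain ⟨ℓ, f, hℓ, hf, hq, hℓp⟩ := p.exists_char
        rw [hq, add_pow_prime_pow_eq' hℓ x y f]
        have hsum : (∑ k ∈ Finset.Ioo 0 (ℓ ^ f),
            x ^ k * y ^ (ℓ ^ f - k) * ((ℓ ^ f).choose k / ℓ : ℕ)) ∈ M := by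
          refine Submodule.sum_mem M fun k _ => ?_
          have hxy : x ^ k * y ^ (ℓ ^ f - k) ∈ UnSet K A n :=
            hmul _ _ (hpow x hx k) (hpow y hy _)
          have : x ^ k * y ^ (ℓ ^ f - k) * ((ℓ ^ f).choose k / ℓ : ℕ)
              = (((ℓ ^ f).choose k / ℓ : ℕ) : 𝓞 K) • (x ^ k * y ^ (ℓ ^ f - k)) := by
            rw [Algebra.smul_def, map_natCast, mul_comm]
          rw [this]
          exact M.smul_mem _ (Submodule.subset_span hxy)
        have heq : x ^ ℓ ^ f + y ^ ℓ ^ f + (ℓ : IK K → A) * (∑ k ∈ Finset.Ioo 0 (ℓ ^ f),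
              x ^ k * y ^ (ℓ ^ f - k) * ((ℓ ^ f).choose k / ℓ : ℕ))
            - x ^ ℓ ^ f - y ^ ℓ ^ f
            = ((ℓ : ℕ) : 𝓞 K) • (∑ k ∈ Finset.Ioo 0 (ℓ ^ f),
              x ^ k * y ^ (ℓ ^ f - k) * ((ℓ ^ f).choose k / ℓ : ℕ)) := by
          rw [Algebra.smul_def, map_natCast]
          ring
        rw [heq]
        exact Submodule.smul_mem_smul hℓp hsum
      refine ⟨?_, ?_, ?_, ?_, ?_, ?_⟩
      · -- zero
        refine ⟨h0, fun p => ?_⟩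
        have : shift p.toIK (0 : IK K → A) - (0 : IK K → A) ^ residueCard p.1 = 0 := by
          rw [shift_zero, zero_pow p.residueCard_ne_zero, sub_zero]
        rw [this]
        exact Submodule.zero_mem _
      · -- one
        refine ⟨h1, fun p => ?_⟩
        have : shift p.toIK (1 : IK K → A) - (1 : IK K → A) ^ residueCard p.1 = 0 := by
          rw [shift_one, one_pow, sub_self]
        rw [this]
        exact Submodule.zero_mem _
      · -- add
        rintro x y ⟨hx, hx2⟩ ⟨hy, hy2⟩
        refine ⟨hadd x y hx hy, fun p => ?_⟩
        have heq : shift p.toIK (x + y) - (x + y) ^ residueCard p.1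
            = (shift p.toIK x - x ^ residueCard p.1) + (shift p.toIK y - y ^ residueCard p.1)
              - ((x + y) ^ residueCard p.1 - x ^ residueCard p.1 - y ^ residueCard p.1) := by
          rw [shift_add]; ring
        rw [heq]
        exact Submodule.sub_mem _ (Submodule.add_mem _ (hx2 p) (hy2 p)) (hdefect p x y hx hy)
      · -- smul
        rintro c x ⟨hx, hx2⟩
        refine ⟨hsmul c x hx, fun p => ?_⟩
        have hcx : (c • x) ^ residueCard p.1 = (c ^ residueCard p.1) • x ^ residueCard p.1 :=
          smul_pow c x _
        have hsh : shift p.toIK (c • x) = c • shift p.toIK x := rfl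
        have heq : shift p.toIK (c • x) - (c • x) ^ residueCard p.1
            = c • (shift p.toIK x - x ^ residueCard p.1)
              - (c ^ residueCard p.1 - c) • x ^ residueCard p.1 := by
          rw [hsh, hcx, smul_sub, sub_smul]
          abel
        rw [heq]
        refine Submodule.sub_mem _ (Submodule.smul_mem _ c (hx2 p)) ?_
        exact Submodule.smul_mem_smul (p.pow_residueCard_sub_mem c)
          (Submodule.subset_span (hpow x hx _))
      · -- mul
        rintro x y ⟨hx, hx2⟩ ⟨hy, hy2⟩
        refine ⟨hmul x y hx hy, fun p => ?_⟩
        have heq : shift p.toIK (x * y) - (x * y) ^ residueCard p.1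
            = shift p.toIK x * (shift p.toIK y - y ^ residueCard p.1)
              + y ^ residueCard p.1 * (shift p.toIK x - x ^ residueCard p.1) := by
          rw [shift_mul]; ring
        rw [heq]
        refine Submodule.add_mem _ ?_ ?_
        · exact hpMmul p.1 _ (hshift p.toIK x hx) _ (hy2 p)
        · exact hpMmul p.1 _ (hpow y hy _) _ (hx2 p)
      · -- shift
        rintro r x ⟨hx, hx2⟩
        refine ⟨hshift r x hx, fun p => ?_⟩
        have heq : shift p.toIK (shift r x) - (shift r x) ^ residueCard p.1
            = shift r (shift p.toIK x - x ^ residueCard p.1) := by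
          rw [shift_comm, ← shift_pow]
          rfl
        rw [heq]
        exact hpMshift p.1 r _ (hx2 p)

end UnSetClosure

section UnSub

variable (K : Type) [Field K] [NumberField K]
variable (A : Type) [CommRing A] [Algebra (𝓞 K) A]

/-- `U_n(A)` as a submodule. -/
def UnSub (n : ℕ) : Submodule (𝓞 K) (IK K → A) where
  carrier := UnSet K A n
  add_mem' h1 h2 := (unset_closure n).2.2.1 _ _ h1 h2
  zero_mem' := (unset_closure n).1
  smul_mem' c x h := (unset_closure n).2.2.2.1 c x h

lemma span_unset (n : ℕ) :
    Submodule.span (𝓞 K) (UnSet K A n) = UnSub K A n := by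
  have h : UnSet K A n = ↑(UnSub K A n) := rfl
  rw [h, Submodule.span_eq]

lemma mem_unsub_iff (n : ℕ) (x : IK K → A) : x ∈ UnSub K A n ↔ x ∈ UnSet K A n := Iff.rfl

end UnSub

section Descend

variable {K : Type} [Field K] [NumberField K]
variable (L : IntermediateField K (AlgebraicClosure K))

lemma mem_subROI_iff (x : ↥(integralClosure (𝓞 K) (AlgebraicClosure K))) :
    x ∈ subRingOfIntegers K L ↔ (x : AlgebraicClosure K) ∈ L := Iff.rfl

lemma algebraMap_val (c : 𝓞 K) :
    ((algebraMap (𝓞 K) ↥(integralClosure (𝓞 K) (AlgebraicClosure K)) c :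
      ↥(integralClosure (𝓞 K) (AlgebraicClosure K))) : AlgebraicClosure K)
    = algebraMap (𝓞 K) (AlgebraicClosure K) c := rfl

lemma algebraMap_F_injective :
    Function.Injective (algebraMap (𝓞 K) (AlgebraicClosure K)) := by
  rw [IsScalarTower.algebraMap_eq (𝓞 K) K (AlgebraicClosure K)]
  exact (algebraMap K (AlgebraicClosure K)).injective.comp (IsFractionRing.injective (𝓞 K) K)

lemma algebraMap_F_mem (c : 𝓞 K) : algebraMap (𝓞 K) (AlgebraicClosure K) c ∈ L := by
  rw [IsScalarTower.algebraMap_apply (𝓞 K) K (AlgebraicClosure K)]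
  exact L.algebraMap_mem _

set_option maxHeartbeats 2000000 in
set_option synthInstance.maxHeartbeats 1000000 in
theorem unset_descend :
    ∀ (n : ℕ) (η : IK K → ↥(integralClosure (𝓞 K) (AlgebraicClosure K)))
      (hm : ∀ a : IK K, η a ∈ subRingOfIntegers K L),
      η ∈ UnSet K ↥(integralClosure (𝓞 K) (AlgebraicClosure K)) n →
      (fun a : IK K => (⟨η a, hm a⟩ : ↥(subRingOfIntegers K L))) ∈
        UnSet K ↥(subRingOfIntegers K L) n := by
  intro n
  induction n with
  | zero => intro η hm _; trivial
  | succ n ih =>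
    intro η hm hη
    obtain ⟨hη1, hη2⟩ := hη
    refine ⟨ih η hm hη1, fun p => ?_⟩
    set q := residueCard p.1 with hq
    set ηB : IK K → ↥(subRingOfIntegers K L) := fun a => ⟨η a, hm a⟩ with hηB
    set dB : IK K → ↥(subRingOfIntegers K L) := shift p.toIK ηB - ηB ^ q with hdB
    set dA : IK K → ↥(integralClosure (𝓞 K) (AlgebraicClosure K)) :=
      shift p.toIK η - η ^ q with hdA
    have hdval : ∀ a : IK K, ((dB a : ↥(integralClosure (𝓞 K) (AlgebraicClosure K)))) = dA a := by
      intro a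
      show (((shift p.toIK ηB) a - (ηB ^ q) a : ↥(subRingOfIntegers K L)) :
        ↥(integralClosure (𝓞 K) (AlgebraicClosure K))) = (shift p.toIK η) a - (η ^ q) a
      push_cast
      rfl
    have hdmem : dA ∈ p.1 • UnSub K ↥(integralClosure (𝓞 K) (AlgebraicClosure K)) n := by
      have h2 := hη2 p
      rw [idealMulSet, SetLike.mem_coe, span_unset] at h2
      exact h2
    obtain ⟨h, c, hhpos, hc0, hch⟩ := p.exists_pow_principal
    have hpow_eq : p.1 * p.1 ^ (h - 1) = p.1 ^ h := by
      conv_rhs => rw [← Nat.succ_pred_eq_of_pos hhpos]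
      rw [pow_succ']
      rfl
    have hcmem : c ∈ p.1 * p.1 ^ (h - 1) := by
      rw [hpow_eq, hch]
      exact Ideal.mem_span_singleton_self c
    have hcF : algebraMap (𝓞 K) (AlgebraicClosure K) c ≠ 0 := fun hcz =>
      hc0 (algebraMap_F_injective (by rw [hcz, map_zero]))
    -- division by c inside U_n(O_Kbar)
    have hdiv : ∀ t ∈ p.1 ^ (h - 1),
        ∃ m ∈ UnSub K ↥(integralClosure (𝓞 K) (AlgebraicClosure K)) n, t • dA = c • m := by
      intro t ht
      refine Submodule.smul_induction_on hdmem (fun r hr z hz => ?_) (fun x y hx hy => ?_)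
      · have htr : t * r ∈ Ideal.span {c} := by
          rw [← hch, ← hpow_eq, mul_comm t r]
          exact Ideal.mul_mem_mul hr ht
        obtain ⟨s, hs⟩ := Ideal.mem_span_singleton.mp htr
        refine ⟨s • z, Submodule.smul_mem _ s hz, ?_⟩
        rw [smul_smul, smul_smul, ← hs, mul_comm t r]
      · obtain ⟨m1, hm1, he1⟩ := hx
        obtain ⟨m2, hm2, he2⟩ := hy
        exact ⟨m1 + m2, Submodule.add_mem _ hm1 hm2, by rw [smul_add, smul_add, he1, he2]⟩
    -- the key induction on elements of p * p^(h-1)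
    have key : ∀ c' ∈ p.1 * p.1 ^ (h - 1),
        ∃ w ∈ p.1 • Submodule.span (𝓞 K) (UnSet K ↥(subRingOfIntegers K L) n),
          c • (fun a : IK K => ((w a : ↥(integralClosure (𝓞 K) (AlgebraicClosure K)))))
            = c' • dA := by
      intro c' hc'
      refine Submodule.mul_induction_on hc' (fun γ hγ t ht => ?_) (fun x y hx hy => ?_)
      · obtain ⟨m, hmN, hmeq⟩ := hdiv t ht
        have hmL : ∀ a : IK K, m a ∈ subRingOfIntegers K L := by
          intro a
          have h1 := congrArg
            (fun x : ↥(integralClosure (𝓞 K) (AlgebraicClosure K)) => (x : AlgebraicClosure K))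
            (congrFun hmeq a)
          simp only [Pi.smul_apply, Algebra.smul_def, MulMemClass.coe_mul, algebraMap_val] at h1
          have hdaL : ((dA a : AlgebraicClosure K)) ∈ L := by
            rw [← hdval a]
            exact (dB a).2
          have hmval : ((m a : AlgebraicClosure K))
              = (algebraMap (𝓞 K) (AlgebraicClosure K) c)⁻¹
                * (algebraMap (𝓞 K) (AlgebraicClosure K) t * (dA a : AlgebraicClosure K)) := by
            rw [eq_inv_mul_iff_mul_eq₀ hcF, ← h1]
          rw [mem_subROI_iff, hmval]
          exact mul_mem (L.inv_mem (algebraMap_F_mem L c))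
            (mul_mem (algebraMap_F_mem L t) hdaL)
        have hmB := ih m hmL hmN
        refine ⟨γ • (fun a : IK K => (⟨m a, hmL a⟩ : ↥(subRingOfIntegers K L))),
          Submodule.smul_mem_smul hγ (Submodule.subset_span hmB), ?_⟩
        have hΦ : (fun a : IK K =>
            (((γ • (fun a : IK K => (⟨m a, hmL a⟩ : ↥(subRingOfIntegers K L)))) a :
              ↥(integralClosure (𝓞 K) (AlgebraicClosure K))))) = γ • m := by
          funext a
          show (((γ • (⟨m a, hmL a⟩ : ↥(subRingOfIntegers K L))) : ↥(subRingOfIntegers K L)) :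
            ↥(integralClosure (𝓞 K) (AlgebraicClosure K))) = γ • m a
          rw [Algebra.smul_def, Algebra.smul_def, MulMemClass.coe_mul]
          rfl
        rw [hΦ, smul_comm c γ, ← hmeq, smul_smul]
      · obtain ⟨w1, hw1, he1⟩ := hx
        obtain ⟨w2, hw2, he2⟩ := hy
        refine ⟨w1 + w2, Submodule.add_mem _ hw1 hw2, ?_⟩
        have hΦ : (fun a : IK K => (((w1 + w2) a : ↥(integralClosure (𝓞 K) (AlgebraicClosure K)))))
            = (fun a : IK K => ((w1 a : ↥(integralClosure (𝓞 K) (AlgebraicClosure K)))))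
              + (fun a : IK K => ((w2 a : ↥(integralClosure (𝓞 K) (AlgebraicClosure K))))) := by
          funext a
          show (((w1 a + w2 a) : ↥(subRingOfIntegers K L)) :
            ↥(integralClosure (𝓞 K) (AlgebraicClosure K))) = _
          push_cast
          rfl
        rw [hΦ, smul_add, he1, he2, ← add_smul]
    obtain ⟨w, hwmem, hweq⟩ := key c hcmem
    have hΦw : (fun a : IK K => ((w a : ↥(integralClosure (𝓞 K) (AlgebraicClosure K))))) = dA := by
      funext a
      have h1 := congrArg
        (fun x : ↥(integralClosure (𝓞 K) (AlgebraicClosure K)) => (x : AlgebraicClosure K))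
        (congrFun hweq a)
      simp only [Pi.smul_apply, Algebra.smul_def, MulMemClass.coe_mul, algebraMap_val] at h1
      exact Subtype.ext (mul_left_cancel₀ hcF h1)
    have hfinal : dB = w := by
      funext a
      apply Subtype.ext
      rw [hdval a, ← congrFun hΦw a]
    show dB ∈ idealMulSet p.1 (UnSet K ↥(subRingOfIntegers K L) n)
    rw [hfinal]
    exact hwmem

end Descend


/-- if all coefficients of `ξ ∈ W_{O_K}(O_K̄)` lie in `O_L` for a finite
subextension `L/K` of `K̄/K`, then `ξ`, regarded as an element of `O_L^{I_K}`, belongs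
to `W_{O_K}(O_L)`; i.e. `O_L^{I_K} ∩ W_{O_K}(O_K̄) ⊆ W_{O_K}(O_L)`. -/
theorem witt_descend_to_finite_level (K : Type) [Field K] [NumberField K]
    (L : IntermediateField K (AlgebraicClosure K)) [FiniteDimensional K ↥L]
    (ξ : IK K → ↥(integralClosure (𝓞 K) (AlgebraicClosure K)))
    (hmem : ∀ a : IK K, ξ a ∈ subRingOfIntegers K L)
    (hξ : ξ ∈ WittSet K ↥(integralClosure (𝓞 K) (AlgebraicClosure K))) :
    (fun a : IK K => (⟨ξ a, hmem a⟩ : ↥(subRingOfIntegers K L))) ∈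
      WittSet K ↥(subRingOfIntegers K L) := by
  rw [WittSet, Set.mem_iInter]
  intro n
  exact unset_descend L n ξ hmem (Set.mem_iInter.mp hξ n)

end
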